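/- Let u ∈ 𝒮 be a π-integrable super-harmonic vector. Then: (i) μ_u(K_{·i}) = π_i + u_i for every i ∈ S; (ii) μ_u(w) + w_i ≤ u_i for every w ∈ ℳ and i ∈ S; (iii) u_i = sup_{w ∈ 𝒦} (μ_u(w) + w_i) = sup_{w ∈ ℳ} (μ_u(w) + w_i) for every i ∈ S. -/

import Mathlib

open Filter Topology

noncomputable section

namespace MaxPlus

variable {S : Type*}

/-- Weight of the path `p 0, p 1, ..., p n` for the kernel `A`. -/
def pathWeight (A : S → S → EReal) (p : ℕ → S) (n : ℕ) : EReal :=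
  ∑ k ∈ Finset.range n, A (p k) (p (k + 1))

/-- The max-plus star kernel `A*`: supremum of weights of paths of length `≥ 0`. -/
def star (A : S → S → EReal) (i j : S) : EReal :=
  ⨆ (n : ℕ) (p : ℕ → S) (_ : p 0 = i ∧ p n = j), pathWeight A p n

/-- The max-plus kernel `A⁺`: supremum of weights of paths of length `≥ 1`. -/
def plus (A : S → S → EReal) (i j : S) : EReal :=
  ⨆ (n : ℕ) (_ : 1 ≤ n) (p : ℕ → S) (_ : p 0 = i ∧ p n = j), pathWeight A p n

/-- `π` is a left super-harmonic row vector (with full support, being real valued). -/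
def LeftSuperharmonic (A : S → S → EReal) (π : S → ℝ) : Prop :=
  ∀ j, (⨆ i, ((π i : EReal) + A i j)) ≤ (π j : EReal)

/-- The Martin kernel `K_{ij} = A*_{ij} - π_j`. -/
def K (A : S → S → EReal) (π : S → ℝ) (i j : S) : EReal :=
  star A i j - (π j : EReal)

/-- `K♭_{ij} = A⁺_{ij} - π_j`. -/
def Kflat (A : S → S → EReal) (π : S → ℝ) (i j : S) : EReal :=
  plus A i j - (π j : EReal)

/-- The set `𝒦` of columns of the Martin kernel. -/
def kerCols (A : S → S → EReal) (π : S → ℝ) : Set (S → EReal) :=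
  Set.range fun j => fun i => K A π i j

/-- The Martin space `ℳ`: closure of `𝒦` in the product topology. -/
def martin (A : S → S → EReal) (π : S → ℝ) : Set (S → EReal) :=
  closure (kerCols A π)

/-- `μ_u(w)`: the limsup of `π_j + u_j` as `K_{·j} → w`. -/
def mu (A : S → S → EReal) (π : S → ℝ) (u : S → EReal) (w : S → EReal) : EReal :=
  ⨅ (W : Set (S → EReal)) (_ : W ∈ 𝓝 w),
    ⨆ (j : S) (_ : (fun i => K A π i j) ∈ W), ((π j : EReal) + u j)

/-- `w♭_i`: the liminf of `K♭_{ij}` as `K_{·j} → w`. -/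
def flat (A : S → S → EReal) (π : S → ℝ) (w : S → EReal) (i : S) : EReal :=
  ⨆ (W : Set (S → EReal)) (_ : W ∈ 𝓝 w),
    ⨅ (j : S) (_ : (fun i' => K A π i' j) ∈ W), Kflat A π i j

/-- The kernel `H(z,w) = μ_w(z)`. -/
def H (A : S → S → EReal) (π : S → ℝ) (z w : S → EReal) : EReal := mu A π w z

/-- The kernel `H♭(z,w) = μ_{w♭}(z)`. -/
def Hflat (A : S → S → EReal) (π : S → ℝ) (z w : S → EReal) : EReal :=
  mu A π (flat A π w) z

/-- The minimal Martin space `ℳᵐ = {w ∈ ℳ : H♭(w,w) = 0}`. -/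
def martinMin (A : S → S → EReal) (π : S → ℝ) : Set (S → EReal) :=
  {w | w ∈ martin A π ∧ Hflat A π w w = 0}

/-- The maximal circuit mean `ρ(A)`. -/
def maxCircuitMean (A : S → S → EReal) : EReal :=
  ⨆ (k : ℕ) (_ : 1 ≤ k) (p : ℕ → S) (_ : p k = p 0),
    (((k : ℝ)⁻¹ : ℝ) : EReal) * pathWeight A p k

/-- `α`-almost-geodesic with respect to the left super-harmonic vector `π`. -/
def IsAlmostGeodesic (A : S → S → EReal) (π : S → ℝ) (x : ℕ → S) : Prop :=
  ∃ α : ℝ, 0 ≤ α ∧ ∀ k : ℕ,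
    (π (x k) : EReal) ≤ (α : EReal) + (π (x 0) : EReal) + pathWeight A x k

/-- The set `𝒮` of `π`-integrable super-harmonic vectors. -/
def Sset (A : S → S → EReal) (π : S → ℝ) : Set (S → EReal) :=
  {u | (∀ i, u i ≠ ⊤) ∧ (∀ i, (⨆ j, A i j + u j) ≤ u i) ∧
    (⨆ j, ((π j : EReal) + u j)) < ⊤}

/-- The set `ℋ` of `π`-integrable harmonic vectors. -/
def Hset (A : S → S → EReal) (π : S → ℝ) : Set (S → EReal) :=
  {u | (∀ i, u i ≠ ⊤) ∧ (∀ i, (⨆ j, A i j + u j) = u i) ∧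
    (⨆ j, ((π j : EReal) + u j)) < ⊤}

/-- A vector is normalised if `sup_j (π_j + u_j) = 0`. -/
def Normalised (π : S → ℝ) (u : S → EReal) : Prop :=
  (⨆ j, ((π j : EReal) + u j)) = 0

/-- `ξ` is an extremal generator of `V`. -/
def ExtremalGen (V : Set (S → EReal)) (ξ : S → EReal) : Prop :=
  ξ ∈ V ∧ ξ ≠ (fun _ => (⊥ : EReal)) ∧
    ∀ u v, u ∈ V → v ∈ V → ξ = (fun i => u i ⊔ v i) → ξ = u ∨ ξ = v

end MaxPlus
namespace MaxPlus

section Aux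

variable {S : Type*} {A : S → S → EReal} {π : S → ℝ} {u : S → EReal}

lemma pathWeight_zero (A : S → S → EReal) (p : ℕ → S) : pathWeight A p 0 = 0 := by
  simp [pathWeight]

lemma pathWeight_succ (A : S → S → EReal) (p : ℕ → S) (n : ℕ) :
    pathWeight A p (n + 1) = pathWeight A p n + A (p n) (p (n + 1)) := by
  simp [pathWeight, Finset.sum_range_succ]

lemma pw_u (hsuper : ∀ i, (⨆ j, A i j + u j) ≤ u i) (p : ℕ → S) :
    ∀ n, pathWeight A p n + u (p n) ≤ u (p 0) := by
  intro n
  induction n with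
  | zero => simp [pathWeight_zero]
  | succ n ih =>
      rw [pathWeight_succ, add_assoc]
      calc pathWeight A p n + (A (p n) (p (n + 1)) + u (p (n + 1)))
          ≤ pathWeight A p n + u (p n) :=
            add_le_add_right ((le_iSup _ (p (n + 1))).trans (hsuper (p n))) _
        _ ≤ u (p 0) := ih

lemma pw_pi (hπ : LeftSuperharmonic A π) (p : ℕ → S) :
    ∀ n, (π (p 0) : EReal) + pathWeight A p n ≤ (π (p n) : EReal) := by
  intro n
  induction n with
  | zero => simp [pathWeight_zero]
  | succ n ih =>
      rw [pathWeight_succ, ← add_assoc]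
      calc (π (p 0) : EReal) + pathWeight A p n + A (p n) (p (n + 1))
          ≤ (π (p n) : EReal) + A (p n) (p (n + 1)) := add_le_add_left ih _
        _ ≤ _ := (le_iSup (fun i => (π i : EReal) + A i (p (n + 1))) (p n)).trans
            (hπ (p (n + 1)))

lemma star_le (hπ : LeftSuperharmonic A π) (i j : S) :
    star A i j ≤ ((π j - π i : ℝ) : EReal) := by
  refine iSup_le fun n => iSup_le fun p => iSup_le fun hp => ?_
  rw [EReal.coe_sub,
    EReal.le_sub_iff_add_le (Or.inl (EReal.coe_ne_bot _)) (Or.inl (EReal.coe_ne_top _)),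
    add_comm, ← hp.1, ← hp.2]
  exact pw_pi hπ p n

lemma star_ne_top (hπ : LeftSuperharmonic A π) (i j : S) : star A i j ≠ ⊤ :=
  ((star_le hπ i j).trans_lt (EReal.coe_lt_top _)).ne

lemma star_self_nonneg (A : S → S → EReal) (i : S) : (0 : EReal) ≤ star A i i := by
  refine le_iSup_of_le 0 (le_iSup_of_le (fun _ => i) (le_iSup_of_le ⟨rfl, rfl⟩ ?_))
  simp [pathWeight_zero]

lemma star_self (hπ : LeftSuperharmonic A π) (i : S) : star A i i = 0 := by
  refine le_antisymm ?_ (star_self_nonneg A i)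
  simpa using star_le hπ i i

lemma star_u (hsuper : ∀ i, (⨆ j, A i j + u j) ≤ u i) (hutop : ∀ i, u i ≠ ⊤) (i j : S) :
    star A i j + u j ≤ u i := by
  by_cases hb : u j = ⊥
  · simp [hb]
  · obtain ⟨r, hr⟩ : ∃ r : ℝ, u j = (r : EReal) :=
      ⟨(u j).toReal, (EReal.coe_toReal (hutop j) hb).symm⟩
    rw [hr, ← EReal.le_sub_iff_add_le (Or.inl (EReal.coe_ne_bot _))
      (Or.inl (EReal.coe_ne_top _))]
    refine iSup_le fun n => iSup_le fun p => iSup_le fun hp => ?_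
    rw [EReal.le_sub_iff_add_le (Or.inl (EReal.coe_ne_bot _)) (Or.inl (EReal.coe_ne_top _)),
      ← hr, ← hp.1, ← hp.2]
    exact pw_u hsuper p n

lemma Kkey (hπ : LeftSuperharmonic A π) (hsuper : ∀ i, (⨆ j, A i j + u j) ≤ u i)
    (hutop : ∀ i, u i ≠ ⊤) (i j : S) :
    K A π i j + ((π j : EReal) + u j) ≤ u i := by
  by_cases hb : star A i j = ⊥
  · simp [K, hb, EReal.bot_sub]
  · obtain ⟨s, hs⟩ : ∃ s : ℝ, star A i j = (s : EReal) :=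
      ⟨(star A i j).toReal, (EReal.coe_toReal (star_ne_top hπ i j) hb).symm⟩
    have hK : K A π i j = ((s - π j : ℝ) : EReal) := by rw [K, hs, EReal.coe_sub]
    rw [hK, ← add_assoc, ← EReal.coe_add]
    have h2 : s - π j + π j = s := by ring
    rw [h2, ← hs]
    exact star_u hsuper hutop i j

lemma mu_K_ge (A : S → S → EReal) (π : S → ℝ) (u : S → EReal) (i : S) :
    (π i : EReal) + u i ≤ mu A π u (fun x => K A π x i) := by
  refine le_iInf fun W => le_iInf fun hW => ?_
  exact le_iSup₂_of_le i (mem_of_mem_nhds hW) le_rfl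

lemma mu_le_sub (hπ : LeftSuperharmonic A π) (hsuper : ∀ i, (⨆ j, A i j + u j) ≤ u i)
    (hutop : ∀ i, u i ≠ ⊤) (w : S → EReal) (i : S) (a : ℝ) (ha : (a : EReal) < w i) :
    mu A π u w ≤ u i - (a : EReal) := by
  have hopen : IsOpen {v : S → EReal | (a : EReal) < v i} :=
    isOpen_lt continuous_const (continuous_apply i)
  have hW : {v : S → EReal | (a : EReal) < v i} ∈ 𝓝 w := hopen.mem_nhds ha
  refine (iInf₂_le _ hW).trans (iSup₂_le fun j hj => ?_)
  simp only [Set.mem_setOf_eq] at hj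
  rw [EReal.le_sub_iff_add_le (Or.inl (EReal.coe_ne_bot a)) (Or.inl (EReal.coe_ne_top a))]
  calc (π j : EReal) + u j + a = (a : EReal) + ((π j : EReal) + u j) := by
        rw [add_comm]
    _ ≤ K A π i j + ((π j : EReal) + u j) := add_le_add_left hj.le _
    _ ≤ u i := Kkey hπ hsuper hutop i j

lemma mu_add_w_le (hπ : LeftSuperharmonic A π) (hsuper : ∀ i, (⨆ j, A i j + u j) ≤ u i)
    (hutop : ∀ i, u i ≠ ⊤) (w : S → EReal) (i : S) :
    mu A π u w + w i ≤ u i := by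
  refine EReal.add_le_of_forall_lt fun m' hm' b' hb' => ?_
  obtain ⟨a, hba, haw⟩ := EReal.exists_between_coe_real hb'
  calc m' + b' ≤ m' + (a : EReal) := add_le_add_right hba.le _
    _ ≤ u i := EReal.add_le_of_le_sub
        (hm'.le.trans (mu_le_sub hπ hsuper hutop w i a haw))

lemma mu_K_eq (hπ : LeftSuperharmonic A π) (hsuper : ∀ i, (⨆ j, A i j + u j) ≤ u i)
    (hutop : ∀ i, u i ≠ ⊤) (i : S) :
    mu A π u (fun x => K A π x i) = (π i : EReal) + u i := by
  refine le_antisymm ?_ (mu_K_ge A π u i)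
  have hKii : K A π i i = ((-π i : ℝ) : EReal) := by
    rw [K, star_self hπ, zero_sub, EReal.coe_neg]
  have h2 := mu_add_w_le hπ hsuper hutop (fun x => K A π x i) i
  simp only [hKii] at h2
  have h3 := (EReal.le_sub_iff_add_le (Or.inl (EReal.coe_ne_bot _))
    (Or.inl (EReal.coe_ne_top _))).2 h2
  calc mu A π u (fun x => K A π x i) ≤ u i - ((-π i : ℝ) : EReal) := h3
    _ = (π i : EReal) + u i := by
        rw [EReal.coe_neg, sub_eq_add_neg, neg_neg, add_comm]

end Aux

/-- for a `π`-integrable super-harmonic vector `u`: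
(i) `μ_u(K_{·i}) = π_i + u_i`; (ii) `μ_u(w) + w_i ≤ u_i` for `w ∈ ℳ`;
(iii) `u_i = sup_{w ∈ 𝒦} (μ_u(w) + w_i) = sup_{w ∈ ℳ} (μ_u(w) + w_i)`. -/



theorem mu_superharmonic {S : Type*} (A : S → S → EReal)
    (hA : ∀ i j, A i j ≠ ⊤) (π : S → ℝ) (hπ : LeftSuperharmonic A π)
    (u : S → EReal) (hutop : ∀ i, u i ≠ ⊤)
    (hsuper : ∀ i, (⨆ j, A i j + u j) ≤ u i)
    (hint : (⨆ j, ((π j : EReal) + u j)) < ⊤) :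
    (∀ i, mu A π u (fun x => K A π x i) = (π i : EReal) + u i) ∧
    (∀ w ∈ martin A π, ∀ i, mu A π u w + w i ≤ u i) ∧
    (∀ i, u i = ⨆ w ∈ kerCols A π, (mu A π u w + w i)) ∧
    (∀ i, u i = ⨆ w ∈ martin A π, (mu A π u w + w i)) := by
  have hii : ∀ i, mu A π u (fun x => K A π x i) + K A π i i = u i := by
    intro i
    have hKii : K A π i i = ((-π i : ℝ) : EReal) := by
      rw [K, star_self hπ, zero_sub, EReal.coe_neg]
    rw [mu_K_eq hπ hsuper hutop, hKii, EReal.coe_neg, add_comm ((π i : EReal)) (u i),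
      ← sub_eq_add_neg, EReal.add_sub_cancel_right]
  refine ⟨mu_K_eq hπ hsuper hutop, fun w _ i => mu_add_w_le hπ hsuper hutop w i,
    fun i => ?_, fun i => ?_⟩
  · refine le_antisymm ?_ (iSup₂_le fun w _ => mu_add_w_le hπ hsuper hutop w i)
    exact le_iSup₂_of_le (fun x => K A π x i) ⟨i, rfl⟩ (le_of_eq (hii i).symm)
  · refine le_antisymm ?_ (iSup₂_le fun w _ => mu_add_w_le hπ hsuper hutop w i)
    exact le_iSup₂_of_le (fun x => K A π x i) (subset_closure ⟨i, rfl⟩)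
      (le_of_eq (hii i).symm)

end MaxPlus
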